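/- A Hermitian-preserving linear map Λ: M_d(C) → M_{d'}(C) is k-positive if and only if (I_k ⊗ Λ)(|ψ⟩⟨ψ|) ≥ 0 for all maximally entangled vectors ψ ∈ C^k ⊗ C^d (i.e., vectors of the form Σ_{i=1}^k e_i ⊗ f_i with f_i orthonormal, up to normalization). -/

import Mathlib

open scoped BigOperators ComplexConjugate ComplexOrder
open Matrix

noncomputable section

/-- The extension `(I_k ⊗ Λ)` of a map `Λ : M_d → M_{d'}`, acting blockwise
on matrices over `ℂ^k ⊗ ℂ^d`. -/
def matExt {d d' : ℕ} (k : ℕ) (Λ : Matrix (Fin d) (Fin d) ℂ → Matrix (Fin d') (Fin d') ℂ)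
    (ρ : Matrix (Fin k × Fin d) (Fin k × Fin d) ℂ) :
    Matrix (Fin k × Fin d') (Fin k × Fin d') ℂ :=
  fun p q => (Λ (Matrix.of fun i j => ρ (p.1, i) (q.1, j))) p.2 q.2

lemma matExt_sum {d d' k : ℕ} (Λ : Matrix (Fin d) (Fin d) ℂ →ₗ[ℂ] Matrix (Fin d') (Fin d') ℂ)
    {α : Type*} (s : Finset α) (ρ : α → Matrix (Fin k × Fin d) (Fin k × Fin d) ℂ) :
    matExt k (fun A => Λ A) (∑ c ∈ s, ρ c) = ∑ c ∈ s, matExt k (fun A => Λ A) (ρ c) := by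
  funext p q
  have h1 : (Matrix.of fun i j => (∑ c ∈ s, ρ c) (p.1, i) (q.1, j)) =
      ∑ c ∈ s, Matrix.of fun i j => ρ c (p.1, i) (q.1, j) := by
    ext i j
    simp [Matrix.sum_apply]
  show (Λ (Matrix.of fun i j => (∑ c ∈ s, ρ c) (p.1, i) (q.1, j))) p.2 q.2 = _
  rw [h1, map_sum]
  simp only [Matrix.sum_apply]
  exact Finset.sum_congr rfl fun c _ => rfl

lemma matExt_rankOne_posSemidef {d d' k : ℕ} (hk : k ≤ d)
    (Λ : Matrix (Fin d) (Fin d) ℂ →ₗ[ℂ] Matrix (Fin d') (Fin d') ℂ)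
    (h : ∀ f : Fin k → EuclideanSpace ℂ (Fin d), Orthonormal ℂ f →
        (matExt k (fun A => Λ A)
          (Matrix.of fun p q : Fin k × Fin d =>
            f p.1 p.2 * conj (f q.1 q.2))).PosSemidef)
    (u : Fin k × Fin d → ℂ) :
    (matExt k (fun A => Λ A) (Matrix.of fun p q => u p * conj (u q))).PosSemidef := by
  classical
  haveI hwf : WellFoundedLT (Fin d) := inferInstance
  set g : Fin k → EuclideanSpace ℂ (Fin d) :=
    fun a => (WithLp.equiv 2 (Fin d → ℂ)).symm fun x => u (a, x) with hg
  set g' : Fin d → EuclideanSpace ℂ (Fin d) :=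
    fun j => if hj : (j : ℕ) < k then g ⟨j, hj⟩ else 0 with hg'
  have hcard : Module.finrank ℂ (EuclideanSpace ℂ (Fin d)) = Fintype.card (Fin d) := by
    simp
  set b := InnerProductSpace.gramSchmidtOrthonormalBasis hcard g' with hb
  set f : Fin k → EuclideanSpace ℂ (Fin d) := fun i => b (Fin.castLE hk i) with hf
  have hforth : Orthonormal ℂ f := b.orthonormal.comp _ (Fin.castLE_injective hk)
  set M : Fin k → Fin k → ℂ := fun a i => inner ℂ (f i) (g a) with hM
  have hrow : ∀ a : Fin k, g a = ∑ i : Fin k, M a i • f i := by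
    intro a
    have h1 : ∑ j : Fin d, (inner ℂ (b j) (g a) : ℂ) • b j = g a := b.sum_repr' (g a)
    have h2 : ∀ j : Fin d, ¬ ((j : ℕ) < k) → (inner ℂ (b j) (g a) : ℂ) • b j = 0 := by
      intro j hj
      have hga : g a = g' (Fin.castLE hk a) := by
        simp only [hg', Fin.castLE]
        rw [dif_pos a.2]
      have hlt : Fin.castLE hk a < j := by
        rw [Fin.lt_def]
        exact lt_of_lt_of_le a.2 (not_lt.1 hj)
      rw [hga, InnerProductSpace.gramSchmidtOrthonormalBasis_inv_triangular hcard g' hlt, zero_smul]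
    rw [← h1]
    rw [← Finset.sum_subset
      (Finset.subset_univ (Finset.univ.map (Fin.castLEEmb hk)))
      (fun j _ hj => h2 j (fun hlt => hj (by
        simp only [Finset.mem_map, Finset.mem_univ, true_and]
        exact ⟨⟨(j : ℕ), hlt⟩, by ext; simp [Fin.castLEEmb, Fin.castLE]⟩)))]
    rw [Finset.sum_map]
    rfl
  have hrowx : ∀ (a : Fin k) (x : Fin d), u (a, x) = ∑ i : Fin k, M a i * f i x := by
    intro a x
    have h0 : g a x = ∑ i : Fin k, (M a i • f i) x := by
      rw [hrow a]
      rw [WithLp.ofLp_sum]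
      exact Finset.sum_apply x Finset.univ _
    exact h0
  set X := matExt k (fun A => Λ A)
      (Matrix.of fun p q : Fin k × Fin d => f p.1 p.2 * conj (f q.1 q.2)) with hX
  have hXpsd : X.PosSemidef := h f hforth
  set N : Matrix (Fin k × Fin d') (Fin k × Fin d') ℂ :=
    fun p q => if p.2 = q.2 then M p.1 q.1 else 0 with hN
  have key : matExt k (fun A => Λ A) (Matrix.of fun p q => u p * conj (u q)) = N * X * Nᴴ := by
    funext p q
    obtain ⟨a, p'⟩ := p
    obtain ⟨c, q'⟩ := q
    have hin : (Matrix.of fun x y => u (a, x) * conj (u (c, y))) =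
        ∑ i : Fin k, ∑ j : Fin k, (M a i * conj (M c j)) •
          (Matrix.of fun x y : Fin d => f i x * conj (f j y)) := by
      ext x y
      simp only [Matrix.of_apply, Matrix.sum_apply, Matrix.smul_apply, smul_eq_mul]
      rw [hrowx a x, hrowx c y, map_sum, Finset.sum_mul_sum]
      apply Finset.sum_congr rfl
      intro i _
      apply Finset.sum_congr rfl
      intro j _
      rw [_root_.map_mul]
      ring
    have lhs : matExt k (fun A => Λ A) (Matrix.of fun p q => u p * conj (u q)) (a, p') (c, q') =
        ∑ i : Fin k, ∑ j : Fin k, M a i * conj (M c j) * X (i, p') (j, q') := by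
      show (Λ (Matrix.of fun x y => u (a, x) * conj (u (c, y)))) p' q' = _
      rw [hin]
      simp only [map_sum, LinearMap.map_smul, Matrix.sum_apply, Matrix.smul_apply, smul_eq_mul]
      rfl
    have rhs : (N * X * Nᴴ) (a, p') (c, q') =
        ∑ i : Fin k, ∑ j : Fin k, M a i * conj (M c j) * X (i, p') (j, q') := by
      have col1 : ∀ w : Fin k × Fin d',
          (∑ v : Fin k × Fin d', N (a, p') v * X v w) = ∑ i : Fin k, M a i * X (i, p') w := by
        intro w
        rw [Fintype.sum_prod_type]
        apply Finset.sum_congr rfl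
        intro i _
        simp [hN, ite_mul, Finset.sum_ite_eq]
      calc (N * X * Nᴴ) (a, p') (c, q')
          = ∑ w : Fin k × Fin d',
            (∑ v : Fin k × Fin d', N (a, p') v * X v w) * conj (N (c, q') w) := by
            simp [Matrix.mul_apply, Matrix.conjTranspose_apply, RCLike.star_def]
        _ = ∑ w : Fin k × Fin d',
            (∑ i : Fin k, M a i * X (i, p') w) * conj (N (c, q') w) :=
            Finset.sum_congr rfl fun w _ => by rw [col1]
        _ = ∑ j : Fin k, (∑ i : Fin k, M a i * X (i, p') (j, q')) * conj (M c j) := by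
            rw [Fintype.sum_prod_type]
            apply Finset.sum_congr rfl
            intro j _
            simp [hN, apply_ite (starRingEnd ℂ), mul_ite, Finset.sum_ite_eq]
        _ = ∑ i : Fin k, ∑ j : Fin k, M a i * conj (M c j) * X (i, p') (j, q') := by
            simp only [Finset.sum_mul]
            rw [Finset.sum_comm]
            exact Finset.sum_congr rfl fun i _ => Finset.sum_congr rfl fun j _ => by ring
    rw [lhs, rhs]
  rw [key]
  exact hXpsd.mul_mul_conjTranspose_same N

/-- A Hermitian-preserving linear map `Λ` is `k`-positive iff
`(I_k ⊗ Λ)(|ψ⟩⟨ψ|) ≥ 0` for all maximally entangled vectors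
`ψ = ∑ i, e i ⊗ f i` (with `f` orthonormal, up to normalization). -/
theorem kpositive_iff_positive_on_maximally_entangled (d d' k : ℕ) (hk : k ≤ d)
    (Λ : Matrix (Fin d) (Fin d) ℂ →ₗ[ℂ] Matrix (Fin d') (Fin d') ℂ)
    (hherm : ∀ A : Matrix (Fin d) (Fin d) ℂ, A.IsHermitian → (Λ A).IsHermitian) :
    (∀ ρ : Matrix (Fin k × Fin d) (Fin k × Fin d) ℂ, ρ.PosSemidef →
        (matExt k (fun A => Λ A) ρ).PosSemidef) ↔
    (∀ f : Fin k → EuclideanSpace ℂ (Fin d), Orthonormal ℂ f →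
        (matExt k (fun A => Λ A)
          (Matrix.of fun p q : Fin k × Fin d =>
            f p.1 p.2 * conj (f q.1 q.2))).PosSemidef) := by
  constructor
  · intro H f _
    apply H
    have : (Matrix.of fun p q : Fin k × Fin d => f p.1 p.2 * conj (f q.1 q.2)) =
        (Matrix.replicateRow Unit (star fun p : Fin k × Fin d => f p.1 p.2))ᴴ *
          (Matrix.replicateRow Unit (star fun p : Fin k × Fin d => f p.1 p.2)) := by
      ext p q
      simp [Matrix.mul_apply, Matrix.conjTranspose_apply, Matrix.replicateRow_apply, RCLike.star_def]
    rw [this]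
    exact Matrix.posSemidef_conjTranspose_mul_self _
  · intro h ρ hρ
    obtain ⟨B, hB⟩ : ∃ B : Matrix (Fin k × Fin d) (Fin k × Fin d) ℂ, ρ = Bᴴ * B := by
      classical
      open scoped MatrixOrder in
      obtain ⟨X, hX, -, hXX⟩ := CFC.exists_sqrt_of_isSelfAdjoint_of_quasispectrumRestricts
        hρ.isHermitian (QuasispectrumRestricts.nnreal_of_nonneg hρ.nonneg)
      exact ⟨X, by rw [← hXX, ← Matrix.star_eq_conjTranspose, hX.star_eq]⟩
    have hρsum : ρ = ∑ c : Fin k × Fin d,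
        Matrix.of (fun p q : Fin k × Fin d => conj (B c p) * conj (conj (B c q))) := by
      ext p q
      rw [hB]
      simp [Matrix.mul_apply, Matrix.conjTranspose_apply, Matrix.sum_apply, RCLike.star_def]
    rw [hρsum, matExt_sum]
    exact Finset.sum_induction _ _ (fun A B hA hB => hA.add hB) Matrix.PosSemidef.zero
      (fun c _ => matExt_rankOne_posSemidef hk Λ h _)
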